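/- arXiv:2410.24064 — 2 statements merged into one kernel-verified Lean document; each statement's English description precedes it below -/
import Mathlib

section
/- With trip(A) as above, the trace space |trip(A)| of trip(A) as an A^e-bimodule is canonically isomorphic to (A⊗|A|) ⊕ (|A|⊗A), via x⊗y⊗z̄ ↦ yx⊗|z| and x⊗ȳ⊗z̄ ↦ |x|⊗yz. -/
set_option synthInstance.maxHeartbeats 1000000
set_option maxHeartbeats 2000000

open TensorProduct MulOpposite

noncomputable section

variable (K A : Type*) [Field K] [CharZero K] [Ring A] [Algebra K A]

/-- The triple of `A`: `trip(A) = ((A⊗A)⊗Aᵒᵖ) ⊕ (A⊗(Aᵒᵖ⊗Aᵒᵖ))`.  Each summand is a ring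
(tensor product of algebras). -/
abbrev Trip := ((A ⊗[K] A) ⊗[K] Aᵐᵒᵖ) × (A ⊗[K] (Aᵐᵒᵖ ⊗[K] Aᵐᵒᵖ))

instance : AddCommGroup (Trip K A) := by
  exact Prod.instAddCommGroup

variable {K A}

/-- The outer left action of `a⊗b̄ ∈ Aᵉ` on `trip(A)`:
`(a⊗b̄)·(x⊗y⊗z̄) = ax⊗y⊗b̄z̄` and `(a⊗b̄)·(x⊗ȳ⊗z̄) = ax⊗b̄ȳ⊗z̄`. -/
def tLAct (a b : A) (t : Trip K A) : Trip K A :=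
  (((a ⊗ₜ[K] (1 : A)) ⊗ₜ[K] op b) * t.1,
    (a ⊗ₜ[K] ((op b : Aᵐᵒᵖ) ⊗ₜ[K] (1 : Aᵐᵒᵖ))) * t.2)

/-- The outer right action of `a⊗b̄ ∈ Aᵉ` on `trip(A)`:
`(x⊗y⊗z̄)·(a⊗b̄) = x⊗ya⊗z̄b̄` and `(x⊗ȳ⊗z̄)·(a⊗b̄) = xa⊗ȳ⊗z̄b̄`. -/
def tRAct (a b : A) (t : Trip K A) : Trip K A :=
  (t.1 * (((1 : A) ⊗ₜ[K] a) ⊗ₜ[K] op b),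
    t.2 * (a ⊗ₜ[K] ((1 : Aᵐᵒᵖ) ⊗ₜ[K] op b)))

variable (K A)

/-- The commutator subspace of `trip(A)` as an `Aᵉ`-bimodule: the trace space `|trip(A)|`
is the quotient by this submodule. -/
def tripComm : Submodule K (Trip K A) :=
  Submodule.span K {w | ∃ (a b : A) (t : Trip K A), w = tLAct a b t - tRAct a b t}

/-- The commutator subspace `[A,A] ⊆ A`; the cyclic quotient `|A| = A/[A,A]`. -/
def cycComm : Submodule K A := Submodule.span K {x | ∃ a b : A, x = a * b - b * a}

-- auxiliary defs
def s5m : A ⊗[K] A →ₗ[K] A := TensorProduct.lift (LinearMap.mul K A).flip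

def s5qop : Aᵐᵒᵖ →ₗ[K] (A ⧸ cycComm K A) :=
  (cycComm K A).mkQ ∘ₗ (opLinearEquiv K).symm.toLinearMap

def s5f1 : (A ⊗[K] A) ⊗[K] Aᵐᵒᵖ →ₗ[K] A ⊗[K] (A ⧸ cycComm K A) :=
  TensorProduct.map (s5m K A) (s5qop K A)

def s5mm : Aᵐᵒᵖ ⊗[K] Aᵐᵒᵖ →ₗ[K] A :=
  (opLinearEquiv K).symm.toLinearMap ∘ₗ TensorProduct.lift (LinearMap.mul K Aᵐᵒᵖ).flip

def s5f2 : A ⊗[K] (Aᵐᵒᵖ ⊗[K] Aᵐᵒᵖ) →ₗ[K] (A ⧸ cycComm K A) ⊗[K] A :=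
  TensorProduct.map (cycComm K A).mkQ (s5mm K A)

def s5Phi0 : Trip K A →ₗ[K] (A ⊗[K] (A ⧸ cycComm K A)) × ((A ⧸ cycComm K A) ⊗[K] A) :=
  (s5f1 K A).prodMap (s5f2 K A)

@[simp] lemma s5f1_tmul (x y : A) (z : Aᵐᵒᵖ) :
    s5f1 K A ((x ⊗ₜ[K] y) ⊗ₜ[K] z) = (y * x) ⊗ₜ[K] Submodule.Quotient.mk (unop z) := by
  simp [s5f1, s5m, s5qop]

@[simp] lemma s5f2_tmul (x : A) (y z : Aᵐᵒᵖ) :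
    s5f2 K A (x ⊗ₜ[K] (y ⊗ₜ[K] z)) =
      (Submodule.Quotient.mk x : A ⧸ cycComm K A) ⊗ₜ[K] (unop y * unop z) := by
  simp [s5f2, s5mm]

lemma cyc_mk_comm (a b : A) :
    (Submodule.Quotient.mk (a * b) : A ⧸ cycComm K A) = Submodule.Quotient.mk (b * a) := by
  rw [Submodule.Quotient.eq]
  exact Submodule.subset_span ⟨a, b, rfl⟩

lemma s5Phi0_ker : tripComm K A ≤ LinearMap.ker (s5Phi0 K A) := by
  rw [tripComm, Submodule.span_le]
  rintro w ⟨a, b, t, rfl⟩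
  simp only [SetLike.mem_coe, LinearMap.mem_ker]
  have h1 : s5f1 K A (((a ⊗ₜ[K] (1:A)) ⊗ₜ[K] op b) * t.1)
      = s5f1 K A (t.1 * (((1:A) ⊗ₜ[K] a) ⊗ₜ[K] op b)) := by
    have := congrFun (congrArg (fun f => f.toFun)
      (show (s5f1 K A) ∘ₗ LinearMap.mulLeft K ((a ⊗ₜ[K] (1:A)) ⊗ₜ[K] op b)
          = (s5f1 K A) ∘ₗ LinearMap.mulRight K (((1:A) ⊗ₜ[K] a) ⊗ₜ[K] op b) from ?_)) t.1
    · exact this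
    · ext x y z
      simp [Algebra.TensorProduct.tmul_mul_tmul, mul_assoc]
      rw [cyc_mk_comm]
  have h2 : s5f2 K A ((a ⊗ₜ[K] ((op b : Aᵐᵒᵖ) ⊗ₜ[K] (1:Aᵐᵒᵖ))) * t.2)
      = s5f2 K A (t.2 * (a ⊗ₜ[K] ((1:Aᵐᵒᵖ) ⊗ₜ[K] op b))) := by
    have := congrFun (congrArg (fun f => f.toFun)
      (show (s5f2 K A) ∘ₗ LinearMap.mulLeft K (a ⊗ₜ[K] ((op b : Aᵐᵒᵖ) ⊗ₜ[K] (1:Aᵐᵒᵖ)))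
          = (s5f2 K A) ∘ₗ LinearMap.mulRight K (a ⊗ₜ[K] ((1:Aᵐᵒᵖ) ⊗ₜ[K] op b)) from ?_)) t.2
    · exact this
    · ext x y z
      simp [Algebra.TensorProduct.tmul_mul_tmul, mul_assoc]
      rw [cyc_mk_comm]
  have : s5Phi0 K A (tLAct a b t) = s5Phi0 K A (tRAct a b t) := by
    simp only [tLAct, tRAct, s5Phi0, LinearMap.prodMap_apply, Prod.mk.injEq]
    exact ⟨h1, h2⟩
  rw [map_sub, this, sub_self]

set_option linter.unusedSectionVars false

def s5Gz : A →ₗ[K] A →ₗ[K] (Trip K A ⧸ tripComm K A) :=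
  (((TensorProduct.mk K (A ⊗[K] A) Aᵐᵒᵖ).comp
      ((TensorProduct.mk K A A) 1)).compr₂
    ((tripComm K A).mkQ ∘ₗ LinearMap.inl K _ _)).flip.comp
    (opLinearEquiv K (M := A)).toLinearMap

@[simp] lemma s5Gz_apply (z u : A) :
    s5Gz K A z u = Submodule.Quotient.mk ((((1:A) ⊗ₜ[K] u) ⊗ₜ[K] op z, 0) : Trip K A) := by
  simp [s5Gz, LinearMap.compr₂]

lemma s5Gz_ker : cycComm K A ≤ LinearMap.ker (s5Gz K A) := by
  rw [cycComm, Submodule.span_le]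
  rintro w ⟨a, b, rfl⟩
  simp only [SetLike.mem_coe, LinearMap.mem_ker]
  ext u
  simp only [LinearMap.zero_apply, map_sub, LinearMap.sub_apply, s5Gz_apply]
  rw [← Submodule.Quotient.mk_sub, Submodule.Quotient.mk_eq_zero]
  apply Submodule.subset_span
  refine ⟨1, b, ((((1:A) ⊗ₜ[K] u) ⊗ₜ[K] op a, 0) : Trip K A), ?_⟩
  simp only [tLAct, tRAct, Algebra.TensorProduct.tmul_mul_tmul, Prod.sub_def]
  simp only [Prod.mk.injEq]
  constructor
  · simp [Algebra.TensorProduct.tmul_mul_tmul]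
  · rw [mul_zero (M₀ := A ⊗[K] (Aᵐᵒᵖ ⊗[K] Aᵐᵒᵖ)), zero_mul (M₀ := A ⊗[K] (Aᵐᵒᵖ ⊗[K] Aᵐᵒᵖ))]

def s5Gx : A →ₗ[K] A →ₗ[K] (Trip K A ⧸ tripComm K A) :=
  ((TensorProduct.mk K A (Aᵐᵒᵖ ⊗[K] Aᵐᵒᵖ)).compl₂
      (((TensorProduct.mk K Aᵐᵒᵖ Aᵐᵒᵖ) (op 1)) ∘ₗ (opLinearEquiv K (M := A)).toLinearMap)).compr₂
    ((tripComm K A).mkQ ∘ₗ LinearMap.inr K _ _)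

@[simp] lemma s5Gx_apply (x v : A) :
    s5Gx K A x v =
      Submodule.Quotient.mk ((0, x ⊗ₜ[K] ((op 1 : Aᵐᵒᵖ) ⊗ₜ[K] op v)) : Trip K A) := by
  simp [s5Gx, LinearMap.compr₂, LinearMap.compl₂]

lemma s5Gx_ker : cycComm K A ≤ LinearMap.ker (s5Gx K A) := by
  rw [cycComm, Submodule.span_le]
  rintro w ⟨a, b, rfl⟩
  simp only [SetLike.mem_coe, LinearMap.mem_ker]
  ext v
  simp only [LinearMap.zero_apply, map_sub, LinearMap.sub_apply, s5Gx_apply]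
  rw [← Submodule.Quotient.mk_sub, Submodule.Quotient.mk_eq_zero]
  apply Submodule.subset_span
  refine ⟨a, 1, ((0, b ⊗ₜ[K] ((op 1 : Aᵐᵒᵖ) ⊗ₜ[K] op v)) : Trip K A), ?_⟩
  simp only [tLAct, tRAct, Algebra.TensorProduct.tmul_mul_tmul, Prod.sub_def]
  simp only [Prod.mk.injEq]
  constructor
  · rw [mul_zero (M₀ := (A ⊗[K] A) ⊗[K] Aᵐᵒᵖ), zero_mul (M₀ := (A ⊗[K] A) ⊗[K] Aᵐᵒᵖ)]
  · simp [Algebra.TensorProduct.tmul_mul_tmul]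

def s5Psi1 : A ⊗[K] (A ⧸ cycComm K A) →ₗ[K] (Trip K A ⧸ tripComm K A) :=
  TensorProduct.lift ((Submodule.liftQ (cycComm K A) (s5Gz K A) (s5Gz_ker K A)).flip)

def s5Psi2 : (A ⧸ cycComm K A) ⊗[K] A →ₗ[K] (Trip K A ⧸ tripComm K A) :=
  TensorProduct.lift (Submodule.liftQ (cycComm K A) (s5Gx K A) (s5Gx_ker K A))

def s5Psi : ((A ⊗[K] (A ⧸ cycComm K A)) × ((A ⧸ cycComm K A) ⊗[K] A)) →ₗ[K]
    (Trip K A ⧸ tripComm K A) :=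
  (s5Psi1 K A).coprod (s5Psi2 K A)

def s5PhiBar : (Trip K A ⧸ tripComm K A) →ₗ[K]
    ((A ⊗[K] (A ⧸ cycComm K A)) × ((A ⧸ cycComm K A) ⊗[K] A)) :=
  Submodule.liftQ (tripComm K A) (s5Phi0 K A) (s5Phi0_ker K A)

@[simp] lemma s5Psi1_tmul (u z : A) :
    s5Psi1 K A (u ⊗ₜ[K] (Submodule.Quotient.mk z : A ⧸ cycComm K A)) =
      Submodule.Quotient.mk ((((1:A) ⊗ₜ[K] u) ⊗ₜ[K] op z, 0) : Trip K A) := by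
  simp [s5Psi1]

@[simp] lemma s5Psi2_tmul (x v : A) :
    s5Psi2 K A ((Submodule.Quotient.mk x : A ⧸ cycComm K A) ⊗ₜ[K] v) =
      Submodule.Quotient.mk ((0, x ⊗ₜ[K] ((op 1 : Aᵐᵒᵖ) ⊗ₜ[K] op v)) : Trip K A) := by
  simp [s5Psi2]
lemma s5_key1 (x y z : A) :
    (Submodule.Quotient.mk (((x ⊗ₜ[K] y) ⊗ₜ[K] op z, 0) : Trip K A)
        : Trip K A ⧸ tripComm K A)
      = Submodule.Quotient.mk ((((1:A) ⊗ₜ[K] (y*x)) ⊗ₜ[K] op z, 0) : Trip K A) := by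
  rw [Submodule.Quotient.eq]
  apply Submodule.subset_span
  refine ⟨x, 1, ((((1:A) ⊗ₜ[K] y) ⊗ₜ[K] op z, 0) : Trip K A), ?_⟩
  simp only [tLAct, tRAct, Prod.sub_def, Prod.mk.injEq]
  constructor
  · simp [Algebra.TensorProduct.tmul_mul_tmul]
  · rw [mul_zero (M₀ := A ⊗[K] (Aᵐᵒᵖ ⊗[K] Aᵐᵒᵖ)), zero_mul (M₀ := A ⊗[K] (Aᵐᵒᵖ ⊗[K] Aᵐᵒᵖ))]

lemma s5_key2 (x y z : A) :
    (Submodule.Quotient.mk ((0, x ⊗ₜ[K] (op y ⊗ₜ[K] op z)) : Trip K A)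
        : Trip K A ⧸ tripComm K A)
      = Submodule.Quotient.mk ((0, x ⊗ₜ[K] ((op 1 : Aᵐᵒᵖ) ⊗ₜ[K] op (y*z))) : Trip K A) := by
  rw [Submodule.Quotient.eq]
  apply Submodule.subset_span
  refine ⟨1, y, ((0, x ⊗ₜ[K] ((op 1 : Aᵐᵒᵖ) ⊗ₜ[K] op z)) : Trip K A), ?_⟩
  simp only [tLAct, tRAct, Prod.sub_def, Prod.mk.injEq]
  constructor
  · rw [mul_zero (M₀ := (A ⊗[K] A) ⊗[K] Aᵐᵒᵖ), zero_mul (M₀ := (A ⊗[K] A) ⊗[K] Aᵐᵒᵖ)]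
  · simp [Algebra.TensorProduct.tmul_mul_tmul]

lemma s5_comp1 : (s5PhiBar K A) ∘ₗ (s5Psi K A) = LinearMap.id := by
  ext u v
  all_goals
    simp [s5Psi, s5PhiBar, s5Phi0]
  all_goals
    induction u using Submodule.Quotient.induction_on
    simp [s5Psi, s5PhiBar, s5Phi0]

lemma s5_comp2 : (s5Psi K A) ∘ₗ (s5PhiBar K A) = LinearMap.id := by
  ext x y z
  all_goals simp only [LinearMap.comp_apply, Submodule.mkQ_apply, LinearMap.id_comp,
    AlgebraTensorModule.curry_apply, curry_apply, LinearMap.coe_restrictScalars,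
    LinearMap.coe_comp, Function.comp_apply, LinearMap.inl_apply, LinearMap.inr_apply,
    LinearMap.id_apply]
  · rw [s5PhiBar, Submodule.liftQ_apply]
    simp only [s5Phi0, LinearMap.prodMap_apply, s5f1_tmul, map_zero, s5Psi,
      LinearMap.coprod_apply, s5Psi1_tmul, LinearMap.map_zero, add_zero]
    simpa using (s5_key1 K A x y (unop z)).symm
  · rw [s5PhiBar, Submodule.liftQ_apply]
    simp only [s5Phi0, LinearMap.prodMap_apply, s5f2_tmul, map_zero, s5Psi,
      LinearMap.coprod_apply, s5Psi2_tmul, LinearMap.map_zero, zero_add]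
    simpa using (s5_key2 K A x (unop y) (unop z)).symm

/-- The trace space `|trip(A)|` of `trip(A)` as an `Aᵉ`-bimodule is
canonically isomorphic to `(A ⊗ |A|) ⊕ (|A| ⊗ A)` via `x⊗y⊗z̄ ↦ yx ⊗ |z|` and
`x⊗ȳ⊗z̄ ↦ |x| ⊗ yz`. -/
theorem stmt5 :
    ∃ Φ : ((Trip K A) ⧸ tripComm K A) ≃ₗ[K]
        ((A ⊗[K] (A ⧸ cycComm K A)) × ((A ⧸ cycComm K A) ⊗[K] A)),
      (∀ x y z : A,
        Φ (Submodule.Quotient.mk ((x ⊗ₜ[K] y) ⊗ₜ[K] op z, 0)) =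
          ((y * x) ⊗ₜ[K] Submodule.Quotient.mk z, 0)) ∧
      (∀ x y z : A,
        Φ (Submodule.Quotient.mk (0, x ⊗ₜ[K] (op y ⊗ₜ[K] op z))) =
          (0, (Submodule.Quotient.mk x) ⊗ₜ[K] (y * z))) := by
  refine ⟨LinearEquiv.ofLinear (s5PhiBar K A) (s5Psi K A) (s5_comp1 K A) (s5_comp2 K A), ?_, ?_⟩
  · intro x y z
    simp [s5PhiBar, s5Phi0, Prod.ext_iff]
  · intro x y z
    simp [s5PhiBar, s5Phi0, Prod.ext_iff]


end
end

section
/- Let 𝒜 be a K-linear category with object set Ob(𝒜), A its category algebra, and S the subalgebra generated by the idempotents [1_v]. For an 𝒜-bimodule ℳ with associated A-bimodule M = ⊕_{v,w} ℳ(v,w), the map f ↦ [f] = ⊕_{v,w} f(v,w) gives a K-linear isomorphism Der(𝒜, ℳ) ≅ Der_S(A, M) between derivations of the category 𝒜 with values in ℳ and S-linear derivations of A with values in M. -/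
set_option synthInstance.maxHeartbeats 400000
set_option maxHeartbeats 1000000

open CategoryTheory MulOpposite DirectSum

noncomputable section

/-- Let `𝒜` be a `K`-linear category with finitely many objects, `A` its
category algebra (presented by structure maps `em` with the category-algebra relations and
the direct-sum property), `S ⊆ A` the subalgebra generated by the idempotents `[1_v]`, and
`M` an `A`-bimodule (so that `ℳ(v,w) = [1_v]·M·[1_w]` is the associated `𝒜`-bimodule).
Then `f ↦ [f]` identifies derivations of the category `𝒜` with values in `ℳ` (families of
`K`-linear maps `𝒜(v,w) → ℳ(v,w)` satisfying the Leibniz rule on composable pairs) with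
`S`-linear derivations `A → M`: every `S`-linear derivation restricts to such a family,
and every such family extends uniquely to an `S`-linear derivation of `A`. -/
theorem stmt17 (K : Type*) [Field K] [CharZero K]
    (C : Type*) [Category C] [Preadditive C] [CategoryTheory.Linear K C]
    [Fintype C] [DecidableEq C]
    (A : Type*) [Ring A] [Algebra K A]
    (em : ∀ {v w : C}, (v ⟶ w) → A)
    (hadd : ∀ (v w : C) (f g : v ⟶ w), em (f + g) = em f + em g)
    (hsmul : ∀ (v w : C) (k : K) (f : v ⟶ w), em (k • f) = k • em f)
    (hcomp : ∀ (v₁ v₂ v₃ : C) (x : v₁ ⟶ v₂) (y : v₂ ⟶ v₃), em x * em y = em (x ≫ y))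
    (horth : ∀ (v₁ v₂ v₃ v₄ : C) (x : v₁ ⟶ v₂) (y : v₃ ⟶ v₄),
      v₂ ≠ v₃ → em x * em y = 0)
    (hone : (1 : A) = ∑ v : C, em (𝟙 v))
    -- `A = ⊕_{v,w} 𝒜(v,w)` as a `K`-vector space
    (hbij : Function.Bijective
      ⇑(DirectSum.toAddMonoid (fun p : C × C =>
          AddMonoidHom.mk' (fun f : p.1 ⟶ p.2 => em f) (hadd p.1 p.2))))
    -- `M` is an `A`-bimodule
    (M : Type*) [AddCommGroup M] [Module K M] [Module A M] [Module Aᵐᵒᵖ M]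
    [SMulCommClass A Aᵐᵒᵖ M] [IsScalarTower K A M] [IsScalarTower K Aᵐᵒᵖ M] :
    -- (a) every `S`-linear derivation `g : A → M` restricts to a derivation of the
    -- category `𝒜` with values in the `𝒜`-bimodule `ℳ(v,w) = [1_v]M[1_w]`
    (∀ g : A →ₗ[K] M,
      (∀ a b : A, g (a * b) = (op b : Aᵐᵒᵖ) • g a + a • g b) →
      (∀ s ∈ Algebra.adjoin K {x : A | ∃ v : C, x = em (𝟙 v)}, g s = 0) →
      ((∀ (v w : C) (f : v ⟶ w),
          em (𝟙 v) • g (em f) = g (em f) ∧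
          (op (em (𝟙 w)) : Aᵐᵒᵖ) • g (em f) = g (em f)) ∧
        (∀ (u v w : C) (x : u ⟶ v) (y : v ⟶ w),
          g (em (x ≫ y)) = (op (em y) : Aᵐᵒᵖ) • g (em x) + em x • g (em y)))) ∧
    -- (b) conversely, every derivation of the category `𝒜` with values in `ℳ` extends to
    -- a unique `S`-linear derivation `A → M`
    (∀ F : ∀ {v w : C}, (v ⟶ w) → M,
      (∀ (v w : C) (f g : v ⟶ w), F (f + g) = F f + F g) →
      (∀ (v w : C) (k : K) (f : v ⟶ w), F (k • f) = k • F f) →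
      (∀ (v w : C) (f : v ⟶ w),
        em (𝟙 v) • F f = F f ∧ (op (em (𝟙 w)) : Aᵐᵒᵖ) • F f = F f) →
      (∀ (u v w : C) (x : u ⟶ v) (y : v ⟶ w),
        F (x ≫ y) = (op (em y) : Aᵐᵒᵖ) • F x + em x • F y) →
      ∃! g : A →ₗ[K] M,
        (∀ a b : A, g (a * b) = (op b : Aᵐᵒᵖ) • g a + a • g b) ∧
        (∀ s ∈ Algebra.adjoin K {x : A | ∃ v : C, x = em (𝟙 v)}, g s = 0) ∧
        (∀ (v w : C) (f : v ⟶ w), g (em f) = F f)) := by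
  -- the additive equivalence from the direct sum
  set e : (⨁ p : C × C, (p.1 ⟶ p.2)) ≃+ A :=
    AddEquiv.ofBijective _ hbij with he
  have heof : ∀ (v w : C) (f : v ⟶ w),
      e (DirectSum.of (fun p : C × C => (p.1 ⟶ p.2)) (v, w) f) = em f := by
    intro v w f
    simp [he, AddEquiv.ofBijective, DirectSum.toAddMonoid_of]
    exact DirectSum.toAddMonoid_of (fun p : C × C =>
      AddMonoidHom.mk' (fun f : p.1 ⟶ p.2 => em f) (hadd p.1 p.2)) (v, w) f
  have key : ∀ (φ ψ : A →+ M),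
      (∀ (v w : C) (f : v ⟶ w), φ (em f) = ψ (em f)) → ∀ a, φ a = ψ a := by
    intro φ ψ h a
    obtain ⟨d, rfl⟩ := hbij.2 a
    have : φ.comp e.toAddMonoidHom = ψ.comp e.toAddMonoidHom := by
      apply DirectSum.addHom_ext
      intro p f
      have := h p.1 p.2 f
      simpa [heof] using this
    have hd : e d = (DirectSum.toAddMonoid (fun p : C × C =>
          AddMonoidHom.mk' (fun f : p.1 ⟶ p.2 => em f) (hadd p.1 p.2))) d := rfl
    rw [← hd]
    exact DFunLike.congr_fun this d
  constructor
  · -- part (a)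
    intro g hg hS
    have hIdem : ∀ v : C, g (em (𝟙 v)) = 0 := fun v =>
      hS _ (Algebra.subset_adjoin ⟨v, rfl⟩)
    constructor
    · intro v w f
      constructor
      · have h1 : em (𝟙 v) * em f = em f := by
          rw [hcomp]; simp
        have h2 := hg (em (𝟙 v)) (em f)
        rw [h1, hIdem] at h2
        simpa using h2.symm
      · have h1 : em f * em (𝟙 w) = em f := by
          rw [hcomp]; simp
        have h2 := hg (em f) (em (𝟙 w))
        rw [h1, hIdem] at h2
        simpa using h2.symm
    · intro u v w x y
      rw [← hcomp]
      exact hg _ _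
  · -- part (b)
    intro F hFadd hFsmul hFid hFcomp
    have F1 : ∀ v : C, F (𝟙 v) = 0 := by
      intro v
      have h := hFcomp v v v (𝟙 v) (𝟙 v)
      rw [Category.comp_id, (hFid v v (𝟙 v)).2, (hFid v v (𝟙 v)).1] at h
      nth_rewrite 1 [← add_zero (F (𝟙 v))] at h
      exact (add_left_cancel h).symm
    set Φ : (⨁ p : C × C, (p.1 ⟶ p.2)) →+ M :=
      DirectSum.toAddMonoid (fun p : C × C =>
        AddMonoidHom.mk' (fun f : p.1 ⟶ p.2 => F f) (fun f g => hFadd p.1 p.2 f g)) with hΦ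
    set g0 : A →+ M := Φ.comp e.symm.toAddMonoidHom with hg0
    have hg0em : ∀ (v w : C) (f : v ⟶ w), g0 (em f) = F f := by
      intro v w f
      have h1 : e.symm (em f) = DirectSum.of (fun p : C × C => (p.1 ⟶ p.2)) (v, w) f := by
        rw [← heof v w f, AddEquiv.symm_apply_apply]
      simp [hg0, h1, hΦ, DirectSum.toAddMonoid_of]
    -- Leibniz on generators
    have hL1 : ∀ {v₁ v₂ v₃ v₄ : C} (x : v₁ ⟶ v₂) (y : v₃ ⟶ v₄),
        g0 (em x * em y) = (op (em y) : Aᵐᵒᵖ) • g0 (em x) + em x • g0 (em y) := by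
      intro v₁ v₂ v₃ v₄ x y
      by_cases h : v₂ = v₃
      · subst h
        rw [hcomp, hg0em, hg0em, hg0em, hFcomp]
      · rw [horth _ _ _ _ x y h, map_zero, hg0em, hg0em]
        have h1 : (op (em y) : Aᵐᵒᵖ) • F x = 0 := by
          conv_lhs => rw [← (hFid _ _ x).2]
          rw [smul_smul, ← op_mul, horth _ _ _ _ (𝟙 v₂) y h, op_zero, zero_smul]
        have h2 : em x • F y = 0 := by
          conv_lhs => rw [← (hFid _ _ y).1]
          rw [smul_smul, horth _ _ _ _ x (𝟙 v₃) h, zero_smul]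
        rw [h1, h2, add_zero]
    -- Leibniz with right argument a generator
    have hL2 : ∀ (a : A) {v w : C} (y : v ⟶ w),
        g0 (a * em y) = (op (em y) : Aᵐᵒᵖ) • g0 a + a • g0 (em y) := by
      intro a v w y
      exact key
        (AddMonoidHom.mk' (fun a => g0 (a * em y)) (by
          intro a b; rw [add_mul, map_add]))
        (AddMonoidHom.mk' (fun a => (op (em y) : Aᵐᵒᵖ) • g0 a + a • g0 (em y)) (by
          intro a b; rw [map_add, smul_add, add_smul]; abel))
        (fun v' w' f => hL1 f y) a
    -- full Leibniz
    have hLeib : ∀ a b : A, g0 (a * b) = (op b : Aᵐᵒᵖ) • g0 a + a • g0 b := by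
      intro a b
      exact key
        (AddMonoidHom.mk' (fun b => g0 (a * b)) (by
          intro b c; rw [mul_add, map_add]))
        (AddMonoidHom.mk' (fun b => (op b : Aᵐᵒᵖ) • g0 a + a • g0 b) (by
          intro b c; rw [map_add, smul_add, MulOpposite.op_add, add_smul]; abel))
        (fun v w f => hL2 a f) b
    -- linearity over K
    have hKsmul : ∀ (k : K) (a : A), g0 (k • a) = k • g0 a := by
      intro k a
      exact key
        (AddMonoidHom.mk' (fun a => g0 (k • a)) (by
          intro a b; rw [smul_add, map_add]))
        (AddMonoidHom.mk' (fun a => k • g0 a) (by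
          intro a b; rw [map_add, smul_add]))
        (fun v w f => by
          simp only [AddMonoidHom.mk'_apply]
          rw [← hsmul, hg0em, hg0em, hFsmul]) a
    -- vanishing on 1
    have hg01 : g0 (1 : A) = 0 := by
      rw [hone, map_sum]
      refine Finset.sum_eq_zero fun v _ => ?_
      rw [hg0em, F1]
    -- vanishing on S
    have hSvanish : ∀ s ∈ Algebra.adjoin K {x : A | ∃ v : C, x = em (𝟙 v)}, g0 s = 0 := by
      intro s hs
      induction hs using Algebra.adjoin_induction with
      | mem x hx =>
        obtain ⟨v, rfl⟩ := hx
        rw [hg0em, F1]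
      | algebraMap r =>
        rw [Algebra.algebraMap_eq_smul_one, hKsmul, hg01, smul_zero]
      | add x y hx hy ihx ihy =>
        rw [map_add, ihx, ihy, add_zero]
      | mul x y hx hy ihx ihy =>
        rw [hLeib, ihx, ihy, smul_zero, smul_zero, add_zero]
    have hmapsmul : ∀ (k : K) (a : A),
        (⇑g0 : A → M) (k • a) = (RingHom.id K) k • (⇑g0 : A → M) a := by
      intro k a; simpa using hKsmul k a
    refine ⟨{ toFun := g0, map_add' := g0.map_add, map_smul' := hmapsmul },
      ⟨hLeib, hSvanish, hg0em⟩, ?_⟩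
    rintro g' ⟨h1, h2, h3⟩
    apply LinearMap.ext
    intro a
    exact key g'.toAddMonoidHom
      (LinearMap.toAddMonoidHom { toFun := g0, map_add' := g0.map_add, map_smul' := hmapsmul })
      (fun v w f => by
        have : g' (em f) = F f := h3 v w f
        simpa using this.trans (hg0em v w f).symm) a


end
end
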